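/- arXiv:2511.11098 — 3 statements merged into one kernel-verified Lean document; each statement's English description precedes it below -/
import Mathlib

section
/- Let $(\mathcal Y, d)$ be a metric space with a second metric $d^*$ on $\mathcal Y$, and let $(\mathcal Z, d_{\mathcal Z})$ be a linear metric space with shift-invariant metric. Suppose there exists $\gamma > 0$ with $d(y_1,y_2) \le \gamma\, d^*(y_1,y_2)$ for all $y_1,y_2$. Let $\Phi : \mathcal Y \rightrightarrows \mathcal Z$ be strongly metrically sub-regular at $(\hat y,\hat z)$ with parameters $\alpha',\beta',\kappa'$ (with respect to $d$ and $d^*$). Let positive numbers $\epsilon,\mu,\kappa,\alpha,\beta$ satisfy $\alpha\le\alpha'$, $\beta+\mu\alpha+\epsilon\le\beta'$, $\mu\gamma\kappa'<1$, and $\kappa=\kappa'/(1-\mu\gamma\kappa')$. Then for every function $\varphi:\mathcal Y\to\mathcal Z$ with $d_{\mathcal Z}(\varphi(\hat y),0)\le\epsilon$ and $d_{\mathcal Z}(\varphi(y),\varphi(\hat y))\le\mu\, d(y,\hat y)$ for all $y$ in the closed $d$-ball of radius $\alpha$ about $\hat y$, the map $\varphi+\Phi$ is strongly metrically sub-regular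 at $(\hat y,\hat z+\varphi(\hat y))$ with parameters $\alpha,\beta,\kappa$. -/
/-- A distance function satisfying the metric axioms. -/
def IsMetric {Y : Type*} (d : Y → Y → ℝ) : Prop :=
  (∀ y, d y y = 0) ∧ (∀ y1 y2, 0 ≤ d y1 y2) ∧ (∀ y1 y2, d y1 y2 = d y2 y1) ∧
    (∀ y1 y2 y3, d y1 y3 ≤ d y1 y2 + d y2 y3) ∧ (∀ y1 y2, d y1 y2 = 0 → y1 = y2)

/-- Strong metric sub-regularity of a set-valued map `Φ : Y ⇉ Z` at `(ŷ, ẑ)`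
with respect to the metrics `d` and `dstar` on `Y` and `dZ` on `Z`,
with parameters `α, β, κ`. -/
def SsR {Y Z : Type*} (d dstar : Y → Y → ℝ) (dZ : Z → Z → ℝ)
    (Φ : Y → Set Z) (yh : Y) (zh : Z) (α β κ : ℝ) : Prop :=
  zh ∈ Φ yh ∧ ∀ y z, d y yh ≤ α → z ∈ Φ y → dZ z zh ≤ β → dstar y yh ≤ κ * dZ z zh

theorem stmt0 {Y Z : Type*} [AddCommGroup Z]
    (d dstar : Y → Y → ℝ) (dZ : Z → Z → ℝ)
    (hd : IsMetric d) (hdstar : IsMetric dstar) (hdZ : IsMetric dZ)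
    (hshift : ∀ z1 z2 w : Z, dZ (z1 + w) (z2 + w) = dZ z1 z2)
    (γ : ℝ) (hγ : 0 < γ) (hcomp : ∀ y1 y2, d y1 y2 ≤ γ * dstar y1 y2)
    (Φ : Y → Set Z) (yh : Y) (zh : Z) (α' β' κ' : ℝ)
    (hα' : 0 < α') (hβ' : 0 < β') (hκ' : 0 < κ')
    (hΦ : SsR d dstar dZ Φ yh zh α' β' κ')
    (ε μ κ α β : ℝ) (hε : 0 < ε) (hμ : 0 < μ) (hκpos : 0 < κ) (hα : 0 < α) (hβ : 0 < β)
    (h1 : α ≤ α') (h2 : β + μ * α + ε ≤ β') (h3 : μ * γ * κ' < 1)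
    (h4 : κ = κ' / (1 - μ * γ * κ'))
    (φ : Y → Z)
    (hφ0 : dZ (φ yh) 0 ≤ ε)
    (hφLip : ∀ y, d y yh ≤ α → dZ (φ y) (φ yh) ≤ μ * d y yh) :
    SsR d dstar dZ (fun y => (fun w => φ y + w) '' Φ y) yh (zh + φ yh) α β κ := by

  obtain ⟨hzh, hss⟩ := hΦ
  obtain ⟨-, dZnn, dZsymm, dZtri, -⟩ := hdZ
  constructor
  · exact ⟨zh, hzh, by rw [add_comm]⟩
  · rintro y z hyα ⟨w, hw, rfl⟩ hzβ
    have hwz : dZ w zh = dZ (φ y + w) (zh + φ y) := by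
      rw [add_comm (φ y) w]; exact (hshift w zh (φ y)).symm
    have hφy : dZ (zh + φ y) (zh + φ yh) = dZ (φ y) (φ yh) := by
      rw [add_comm zh (φ y), add_comm zh (φ yh), hshift]
    have hLip := hφLip y hyα
    have hbound : dZ w zh ≤ dZ (φ y + w) (zh + φ yh) + μ * d y yh := by
      rw [hwz]
      calc dZ (φ y + w) (zh + φ y)
          ≤ dZ (φ y + w) (zh + φ yh) + dZ (zh + φ yh) (zh + φ y) := dZtri _ _ _
        _ = dZ (φ y + w) (zh + φ yh) + dZ (φ y) (φ yh) := by
            rw [dZsymm (zh + φ yh), hφy]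
        _ ≤ dZ (φ y + w) (zh + φ yh) + μ * d y yh := by linarith
    have hwβ' : dZ w zh ≤ β' := by nlinarith [hd.2.1 y yh]
    have hstar := hss y w (le_trans hyα h1) hw hwβ'
    have hdy : d y yh ≤ γ * dstar y yh := hcomp y yh
    have hpos : 0 < 1 - μ * γ * κ' := by linarith
    have h5 : κ' * dZ w zh ≤ κ' * (dZ (φ y + w) (zh + φ yh) + μ * d y yh) :=
      mul_le_mul_of_nonneg_left hbound hκ'.le
    have h6 : (κ' * μ) * d y yh ≤ (κ' * μ) * (γ * dstar y yh) :=
      mul_le_mul_of_nonneg_left hdy (mul_pos hκ' hμ).le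
    have key : (1 - μ * γ * κ') * dstar y yh ≤ κ' * dZ (φ y + w) (zh + φ yh) := by
      nlinarith
    rw [h4, div_mul_eq_mul_div, le_div_iff₀ hpos]
    nlinarith
end

section
/- Let $U\subset\mathbb R^m$ be bounded and $\Gamma\subset[0,T]$ finite. The function $d^*(u_1,u_2) := \inf\{\varepsilon>0 : |u_1(t)-u_2(t)|\le\varepsilon \text{ for a.e. } t\in[0,T]\setminus(\Gamma+[-\varepsilon,\varepsilon])\}$ defines a metric on the set of (equivalence classes of a.e. equal) measurable functions $u:[0,T]\to U$; in particular it satisfies the triangle inequality $d^*(u_1,u_3)\le d^*(u_1,u_2)+d^*(u_2,u_3)$. -/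
open MeasureTheory Set

/-- The metric `d^*` on controls: the infimum of all `ε > 0` such that
`|u1(t) - u2(t)| ≤ ε` for a.e. `t ∈ [0,T] \ (Γ + [-ε, ε])`. -/
noncomputable def dstar {m : ℕ} (T : ℝ) (Γ : Finset ℝ)
    (u1 u2 : ℝ → EuclideanSpace ℝ (Fin m)) : ℝ :=
  sInf {ε : ℝ | 0 < ε ∧
    ∀ᵐ t ∂(volume.restrict (Icc 0 T \ ⋃ s ∈ (Γ : Set ℝ), Icc (s - ε) (s + ε))),
      ‖u1 t - u2 t‖ ≤ ε}

namespace DstarAux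

/-- The defining set of `dstar`. -/
def Sset {m : ℕ} (T : ℝ) (Γ : Finset ℝ) (u v : ℝ → EuclideanSpace ℝ (Fin m)) : Set ℝ :=
  {ε : ℝ | 0 < ε ∧
    ∀ᵐ t ∂(volume.restrict (Icc 0 T \ ⋃ s ∈ (Γ : Set ℝ), Icc (s - ε) (s + ε))),
      ‖u t - v t‖ ≤ ε}

lemma dstar_eq {m : ℕ} (T : ℝ) (Γ : Finset ℝ) (u v : ℝ → EuclideanSpace ℝ (Fin m)) :
    dstar T Γ u v = sInf (Sset T Γ u v) := rfl

lemma bddBelow_Sset {m : ℕ} (T : ℝ) (Γ : Finset ℝ) (u v : ℝ → EuclideanSpace ℝ (Fin m)) :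
    BddBelow (Sset T Γ u v) := ⟨0, fun _ hx => hx.1.le⟩

/-- the "bad" set -/
def Bset (Γ : Finset ℝ) (ε : ℝ) : Set ℝ := ⋃ s ∈ (Γ : Set ℝ), Icc (s - ε) (s + ε)

lemma measurable_Bset (Γ : Finset ℝ) (ε : ℝ) : MeasurableSet (Bset Γ ε) :=
  Γ.finite_toSet.measurableSet_biUnion (fun _ _ => measurableSet_Icc)

lemma Bset_mono (Γ : Finset ℝ) {ε ε' : ℝ} (h : ε ≤ ε') : Bset Γ ε ⊆ Bset Γ ε' := by
  refine iUnion₂_mono fun s _ => Icc_subset_Icc (by linarith) (by linarith)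

lemma mem_Sset_iff {m : ℕ} (T : ℝ) (Γ : Finset ℝ) (u v : ℝ → EuclideanSpace ℝ (Fin m)) (ε : ℝ) :
    ε ∈ Sset T Γ u v ↔ 0 < ε ∧
      ∀ᵐ t ∂(volume.restrict (Icc 0 T)), t ∉ Bset Γ ε → ‖u t - v t‖ ≤ ε := by
  have hres : volume.restrict (Icc (0:ℝ) T \ Bset Γ ε)
      = (volume.restrict (Icc (0:ℝ) T)).restrict (Bset Γ ε)ᶜ := by
    rw [Measure.restrict_restrict (measurable_Bset Γ ε).compl, compl_eq_univ_diff]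
    congr 1
    rw [diff_eq, diff_eq, inter_comm]
    simp [inter_comm]
  constructor
  · rintro ⟨hε, hae⟩
    refine ⟨hε, ?_⟩
    rw [show (Icc (0:ℝ) T \ ⋃ s ∈ (Γ : Set ℝ), Icc (s - ε) (s + ε)) = Icc 0 T \ Bset Γ ε from rfl,
      hres] at hae
    exact (ae_restrict_iff' (measurable_Bset Γ ε).compl).mp hae
  · rintro ⟨hε, hae⟩
    refine ⟨hε, ?_⟩
    show ∀ᵐ t ∂(volume.restrict (Icc (0:ℝ) T \ Bset Γ ε)), ‖u t - v t‖ ≤ ε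
    rw [hres]
    exact (ae_restrict_iff' (measurable_Bset Γ ε).compl).mpr hae

end DstarAux

open DstarAux

/-- `d^*` is a metric on (a.e.-equivalence classes of) measurable functions
`[0,T] → U`; in particular it satisfies the triangle inequality. -/
theorem stmt2 {m : ℕ} (T : ℝ) (hT : 0 < T) (U : Set (EuclideanSpace ℝ (Fin m)))
    (hU : Bornology.IsBounded U) (Γ : Finset ℝ) (hΓ : (Γ : Set ℝ) ⊆ Icc 0 T)
    (u1 u2 u3 : ℝ → EuclideanSpace ℝ (Fin m))
    (h1 : Measurable u1) (h2 : Measurable u2) (h3 : Measurable u3)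
    (hu1 : ∀ᵐ t ∂(volume.restrict (Icc 0 T)), u1 t ∈ U)
    (hu2 : ∀ᵐ t ∂(volume.restrict (Icc 0 T)), u2 t ∈ U)
    (hu3 : ∀ᵐ t ∂(volume.restrict (Icc 0 T)), u3 t ∈ U) :
    (0 ≤ dstar T Γ u1 u2) ∧
    (dstar T Γ u1 u2 = dstar T Γ u2 u1) ∧
    (dstar T Γ u1 u3 ≤ dstar T Γ u1 u2 + dstar T Γ u2 u3) ∧
    (dstar T Γ u1 u2 = 0 ↔ u1 =ᵐ[volume.restrict (Icc 0 T)] u2) := by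
  classical
  -- a uniform bound on U
  obtain ⟨C₀, hC₀⟩ := hU.subset_closedBall 0
  set C : ℝ := max C₀ 0 with hCdef
  have hC : U ⊆ Metric.closedBall 0 C :=
    hC₀.trans (Metric.closedBall_subset_closedBall (le_max_left _ _))
  -- every pair of U-valued controls has `max (2C+1) 1 ∈ Sset`
  have hne : ∀ u v : ℝ → EuclideanSpace ℝ (Fin m),
      (∀ᵐ t ∂(volume.restrict (Icc 0 T)), u t ∈ U) →
      (∀ᵐ t ∂(volume.restrict (Icc 0 T)), v t ∈ U) →
      (Sset T Γ u v).Nonempty := by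
    intro u v hu hv
    refine ⟨2*C + 1, (mem_Sset_iff T Γ u v _).mpr ⟨by positivity, ?_⟩⟩
    filter_upwards [hu, hv] with t htu htv _
    have h1 : ‖u t‖ ≤ C := by simpa using hC htu
    have h2 : ‖v t‖ ≤ C := by simpa using hC htv
    calc ‖u t - v t‖ ≤ ‖u t‖ + ‖v t‖ := norm_sub_le _ _
      _ ≤ 2*C + 1 := by linarith
  -- nonnegativity
  have hnonneg : ∀ u v : ℝ → EuclideanSpace ℝ (Fin m), 0 ≤ dstar T Γ u v := by
    intro u v
    exact Real.sInf_nonneg (fun x hx => hx.1.le)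
  refine ⟨hnonneg u1 u2, ?_, ?_, ?_⟩
  · -- symmetry
    rw [dstar_eq, dstar_eq]
    congr 1
    ext ε
    simp only [Sset, mem_setOf_eq]
    constructor
    · rintro ⟨hε, h⟩
      refine ⟨hε, ?_⟩
      filter_upwards [h] with t ht
      rwa [norm_sub_rev]
    · rintro ⟨hε, h⟩
      refine ⟨hε, ?_⟩
      filter_upwards [h] with t ht
      rwa [norm_sub_rev]
  · -- triangle inequality
    have key : ∀ ε₁ ∈ Sset T Γ u1 u2, ∀ ε₂ ∈ Sset T Γ u2 u3,
        dstar T Γ u1 u3 ≤ ε₁ + ε₂ := by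
      intro ε₁ hε₁ ε₂ hε₂
      rw [mem_Sset_iff] at hε₁ hε₂
      rw [dstar_eq]
      refine csInf_le (bddBelow_Sset T Γ u1 u3) ((mem_Sset_iff T Γ u1 u3 _).mpr
        ⟨by linarith [hε₁.1, hε₂.1], ?_⟩)
      filter_upwards [hε₁.2, hε₂.2] with t h12 h23 htB
      have hB1 : t ∉ Bset Γ ε₁ := fun h => htB (Bset_mono Γ (by linarith [hε₂.1]) h)
      have hB2 : t ∉ Bset Γ ε₂ := fun h => htB (Bset_mono Γ (by linarith [hε₁.1]) h)
      calc ‖u1 t - u3 t‖ ≤ ‖u1 t - u2 t‖ + ‖u2 t - u3 t‖ := norm_sub_le_norm_sub_add_norm_sub _ _ _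
        _ ≤ ε₁ + ε₂ := add_le_add (h12 hB1) (h23 hB2)
    have h12ne := hne u1 u2 hu1 hu2
    have h23ne := hne u2 u3 hu2 hu3
    have step1 : ∀ ε₁ ∈ Sset T Γ u1 u2, dstar T Γ u1 u3 - ε₁ ≤ dstar T Γ u2 u3 := by
      intro ε₁ hε₁
      rw [dstar_eq (u := u2)]
      exact le_csInf h23ne (fun ε₂ hε₂ => by linarith [key ε₁ hε₁ ε₂ hε₂])
    have step2 : dstar T Γ u1 u3 - dstar T Γ u2 u3 ≤ dstar T Γ u1 u2 := by
      rw [dstar_eq (u := u1) (v := u2)]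
      exact le_csInf h12ne (fun ε₁ hε₁ => by linarith [step1 ε₁ hε₁])
    linarith
  · -- zero iff a.e. equal
    constructor
    · intro hz
      -- pick δ n ∈ Sset with δ n < 1/(n+1)
      have hpick : ∀ n : ℕ, ∃ δ ∈ Sset T Γ u1 u2, δ < 1/(n+1) := by
        intro n
        refine exists_lt_of_csInf_lt (hne u1 u2 hu1 hu2) ?_
        rw [← dstar_eq, hz]
        positivity
      choose δ hδS hδlt using hpick
      have hae : ∀ᵐ t ∂(volume.restrict (Icc (0:ℝ) T)),
          ∀ n : ℕ, t ∉ Bset Γ (δ n) → ‖u1 t - u2 t‖ ≤ δ n := by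
        rw [ae_all_iff]
        exact fun n => ((mem_Sset_iff T Γ u1 u2 (δ n)).mp (hδS n)).2
      have hΓnull : ∀ᵐ t ∂(volume.restrict (Icc (0:ℝ) T)), t ∉ (Γ : Set ℝ) := by
        refine ae_restrict_of_ae ?_
        rw [ae_iff]
        simpa using Γ.finite_toSet.measure_zero volume
      filter_upwards [hae, hΓnull] with t ht htΓ
      -- find r > 0 with t ∉ Bset Γ ε when 0 < ε < r
      have hr : ∃ r > 0, ∀ ε : ℝ, ε < r → t ∉ Bset Γ ε := by
        rcases Γ.eq_empty_or_nonempty with hΓe | hΓne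
        · exact ⟨1, one_pos, fun ε _ h => by simp [Bset, hΓe] at h⟩
        · refine ⟨Γ.inf' hΓne (fun s => |t - s|), ?_, ?_⟩
          · rw [gt_iff_lt, Finset.lt_inf'_iff]
            intro s hs
            exact abs_pos.mpr (sub_ne_zero.mpr (fun h => htΓ (h ▸ hs)))
          · intro ε hε hmem
            simp only [Bset, mem_iUnion, Finset.mem_coe, exists_prop] at hmem
            obtain ⟨s, hs, hts⟩ := hmem
            have h1 : |t - s| ≤ ε := abs_le.mpr ⟨by linarith [hts.1], by linarith [hts.2]⟩
            have h2 : Γ.inf' hΓne (fun s => |t - s|) ≤ |t - s| := Finset.inf'_le _ hs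
            linarith
      obtain ⟨r, hrpos, hrB⟩ := hr
      by_contra hne0
      have hc : 0 < ‖u1 t - u2 t‖ := by
        rwa [norm_pos_iff, sub_ne_zero]
      obtain ⟨n, hn⟩ := exists_nat_one_div_lt (lt_min hc hrpos)
      have hδn : δ n < min ‖u1 t - u2 t‖ r := lt_trans (hδlt n) (by exact_mod_cast hn)
      have hb := ht n (hrB (δ n) (hδn.trans_le (min_le_right _ _)))
      have := hδn.trans_le (min_le_left _ _)
      linarith
    · intro heq
      have hle : ∀ ε : ℝ, 0 < ε → dstar T Γ u1 u2 ≤ ε := by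
        intro ε hε
        rw [dstar_eq]
        refine csInf_le (bddBelow_Sset T Γ u1 u2) ((mem_Sset_iff T Γ u1 u2 ε).mpr ⟨hε, ?_⟩)
        filter_upwards [heq] with t ht _
        rw [ht]
        simpa using hε.le
      have : dstar T Γ u1 u2 ≤ 0 :=
        le_of_forall_pos_le_add (fun ε hε => by simpa using hle ε hε)
      exact le_antisymm this (hnonneg u1 u2)
end

section
/- Let $U\subset\mathbb R^m$ be convex and compact, and let $\sigma,\hat\sigma\in L^\infty(0,T;\mathbb R^m)$. Suppose $u,\hat u:[0,T]\to U$ are measurable and satisfy the pointwise variational inclusions $\sigma(t)+N_U(u(t))\ni 0$ and $\hat\sigma(t)+N_U(\hat u(t))\ni 0$ for a.e. $t$. If for some $t$ both inclusions hold and $\hat u(t)$ is the unique minimizer of $w\mapsto\langle\hat\sigma(t),w\rangle$ over $U$, and moreover $\min_{w\in U,\, w\ne \hat u(t) \text{ extreme}} \langle \hat\sigma(t), w - \hat u(t)\rangle > 2\,\mathrm{diam}(U)\,\|\sigma-\hat\sigma\|_\infty$, then $u(t) = \hat u(t)$. -/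
theorem stmt12 {m : ℕ} (U : Set (EuclideanSpace ℝ (Fin m)))
    (hconv : Convex ℝ U) (hcomp : IsCompact U)
    (a ahat : EuclideanSpace ℝ (Fin m))
    (u0 uhat0 : EuclideanSpace ℝ (Fin m)) (hu0 : u0 ∈ U) (huhat0 : uhat0 ∈ U)
    (hmin : ∀ w ∈ U, (0:ℝ) ≤ inner ℝ a (w - u0))
    (hhatmin : ∀ w ∈ U, (0:ℝ) ≤ inner ℝ ahat (w - uhat0))
    (huniq : ∀ w ∈ U, w ≠ uhat0 → (inner ℝ ahat uhat0 : ℝ) < inner ℝ ahat w)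
    (hmargin : ∀ w ∈ Set.extremePoints ℝ U, w ≠ uhat0 →
      2 * Metric.diam U * ‖a - ahat‖ < (inner ℝ ahat (w - uhat0) : ℝ)) :
    u0 = uhat0 := by
  set N : ℝ := ‖a - ahat‖ with hN
  have hN0 : 0 ≤ N := norm_nonneg _
  set C : Set (EuclideanSpace ℝ (Fin m)) :=
    {w | 2 * N * ‖w - uhat0‖ ≤ (inner ℝ ahat (w - uhat0) : ℝ)} with hC
  -- C is convex
  have hCconv : Convex ℝ C := by
    intro x hx y hy s t hs ht hst
    simp only [hC, Set.mem_setOf_eq] at hx hy ⊢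
    have huh : s • uhat0 + t • uhat0 = uhat0 := by rw [← add_smul, hst, one_smul]
    have hxy : s • x + t • y - uhat0 = s • (x - uhat0) + t • (y - uhat0) := by
      have h' : s • (x - uhat0) + t • (y - uhat0)
          = s • x + t • y - (s • uhat0 + t • uhat0) := by module
      rw [h', huh]
    rw [hxy, inner_add_right, inner_smul_right, inner_smul_right]
    calc 2 * N * ‖s • (x - uhat0) + t • (y - uhat0)‖
        ≤ 2 * N * (‖s • (x - uhat0)‖ + ‖t • (y - uhat0)‖) := by
          apply mul_le_mul_of_nonneg_left (norm_add_le _ _) (by positivity)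
      _ = s * (2 * N * ‖x - uhat0‖) + t * (2 * N * ‖y - uhat0‖) := by
          rw [norm_smul, norm_smul, Real.norm_eq_abs, Real.norm_eq_abs,
            abs_of_nonneg hs, abs_of_nonneg ht]; ring
      _ ≤ s * (inner ℝ ahat (x - uhat0) : ℝ) + t * (inner ℝ ahat (y - uhat0) : ℝ) := by
          gcongr
  -- C is closed
  have hCclosed : IsClosed C := by
    apply isClosed_le
    · exact continuous_const.mul ((continuous_id.sub continuous_const).norm)
    · exact continuous_const.inner (continuous_id.sub continuous_const)
  -- extreme points lie in C
  have hE : Set.extremePoints ℝ U ⊆ C := by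
    intro w hw
    by_cases hwe : w = uhat0
    · simp [hC, hwe]
    · have h1 : 2 * Metric.diam U * N < (inner ℝ ahat (w - uhat0) : ℝ) := hmargin w hw hwe
      have hwU : w ∈ U := hw.1
      have h2 : ‖w - uhat0‖ ≤ Metric.diam U := by
        rw [← dist_eq_norm]
        exact Metric.dist_le_diam_of_mem hcomp.isBounded hwU huhat0
      have : 2 * N * ‖w - uhat0‖ ≤ 2 * Metric.diam U * N := by nlinarith
      exact this.trans h1.le
  -- u0 ∈ C via Krein–Milman
  have hu0C : u0 ∈ C := by
    have hKM := closure_convexHull_extremePoints hcomp hconv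
    have : U ⊆ C := by
      rw [← hKM]
      exact closure_minimal (convexHull_min hE hCconv) hCclosed
    exact this hu0
  have key1 : 2 * N * ‖u0 - uhat0‖ ≤ (inner ℝ ahat (u0 - uhat0) : ℝ) := hu0C
  have key2 : (inner ℝ ahat (u0 - uhat0) : ℝ) ≤ N * ‖u0 - uhat0‖ := by
    have ha : (inner ℝ a (u0 - uhat0) : ℝ) ≤ 0 := by
      have := hmin uhat0 huhat0
      have hrev : (inner ℝ a (uhat0 - u0) : ℝ) = -(inner ℝ a (u0 - uhat0) : ℝ) := by
        rw [← inner_neg_right]; congr 1; abel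
      linarith [hrev ▸ this]
    have hsplit : (inner ℝ ahat (u0 - uhat0) : ℝ)
        = (inner ℝ (ahat - a) (u0 - uhat0) : ℝ) + (inner ℝ a (u0 - uhat0) : ℝ) := by
      rw [← inner_add_left]; congr 1; abel
    have hcs : (inner ℝ (ahat - a) (u0 - uhat0) : ℝ) ≤ ‖ahat - a‖ * ‖u0 - uhat0‖ :=
      real_inner_le_norm _ _
    have hnn : ‖ahat - a‖ = N := by rw [hN, norm_sub_rev]
    linarith [hnn ▸ hcs]
  have hzero : N * ‖u0 - uhat0‖ ≤ 0 := by linarith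
  rcases mul_nonpos_iff.mp hzero with ⟨h1, h2⟩ | ⟨h1, h2⟩
  · -- ‖u0-uhat0‖ ≤ 0
    have : ‖u0 - uhat0‖ = 0 := le_antisymm h2 (norm_nonneg _)
    exact sub_eq_zero.mp (norm_eq_zero.mp this)
  · -- N ≤ 0, so N = 0
    have hNzero : N = 0 := le_antisymm h1 hN0
    by_contra hne
    have := huniq u0 hu0 hne
    have hpos : (0:ℝ) < (inner ℝ ahat (u0 - uhat0) : ℝ) := by
      rw [inner_sub_right]; linarith
    rw [hNzero, zero_mul] at key2
    linarith
end
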